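/- Let m ≥ n ≥ 1 and let N(n,m) be the set of all frames Φ ∈ 𝕂^{n×m} whose sparsest dual frame has exactly n² non-zero entries, i.e., min{‖Ψ‖₀ : Ψ Φ* = I_n} = n². Then every frame Φ ∈ 𝕂^{n×m} is arbitrarily close (in the Euclidean topology on 𝕂^{n×m}) to a frame in N(n,m). -/

import Mathlib

open Matrix

/-- The number of non-vanishing entries of a matrix (the `ℓ₀`-"norm"). -/
noncomputable def l0Norm {𝕂 : Type} [RCLike 𝕂] {n m : ℕ}
    (Ψ : Matrix (Fin n) (Fin m) 𝕂) : ℕ :=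
  Set.ncard {p : Fin n × Fin m | Ψ p.1 p.2 ≠ 0}

/-- `N(n,m)`: the set of frames in `𝕂^{n×m}` whose sparsest dual frame has exactly
`n²` non-zero entries. -/
def maxSparsityFrames (𝕂 : Type) [RCLike 𝕂] (n m : ℕ) :
    Set (Matrix (Fin n) (Fin m) 𝕂) :=
  {Φ | Φ.rank = n ∧
    IsLeast {c | ∃ Ψ : Matrix (Fin n) (Fin m) 𝕂, Ψ * Φᴴ = 1 ∧ l0Norm Ψ = c} (n ^ 2)}

open scoped Classical

/-- Matrices all of whose (injective) square minors of size at most `n` are nonzero. -/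
def goodSet (𝕂 : Type) [RCLike 𝕂] (n m : ℕ) : Set (Matrix (Fin n) (Fin m) 𝕂) :=
  {A | ∀ k : ℕ, k ≤ n → ∀ (r : Fin k ↪ Fin n) (t : Fin k ↪ Fin m),
    det (A.submatrix r t) ≠ 0}

open Polynomial in
private lemma eval_det_add_smul_one {𝕂 : Type} [RCLike 𝕂] {k : ℕ}
    (M : Matrix (Fin k) (Fin k) 𝕂) (ε : 𝕂) :
    ((-M).charpoly).eval ε = det (M + ε • 1) := by
  rw [Matrix.charpoly, ← coe_evalRingHom, RingHom.map_det]
  congr 1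
  ext i j
  by_cases h : i = j <;>
    simp [h, Matrix.charmatrix_apply, RingHom.mapMatrix_apply, Matrix.map_apply,
      Matrix.one_apply, Matrix.diagonal_apply, add_comm]

private lemma isOpen_minor_ne {𝕂 : Type} [RCLike 𝕂] {n m k : ℕ}
    (r : Fin k → Fin n) (t : Fin k → Fin m) :
    IsOpen {A : Matrix (Fin n) (Fin m) 𝕂 | det (A.submatrix r t) ≠ 0} := by
  have hc : Continuous fun A : Matrix (Fin n) (Fin m) 𝕂 => det (A.submatrix r t) :=
    (continuous_id.matrix_submatrix r t).matrix_det
  exact isOpen_compl_singleton.preimage hc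

private lemma dense_minor_ne {𝕂 : Type} [RCLike 𝕂] {n m k : ℕ}
    (r : Fin k ↪ Fin n) (t : Fin k ↪ Fin m) :
    Dense {A : Matrix (Fin n) (Fin m) 𝕂 | det (A.submatrix r t) ≠ 0} := by
  intro A
  set E : Matrix (Fin n) (Fin m) 𝕂 :=
    Matrix.of fun i j => if ∃ a, r a = i ∧ t a = j then (1 : 𝕂) else 0 with hEdef
  have hE : E.submatrix r t = 1 := by
    ext a b
    simp only [submatrix_apply, of_apply, one_apply, E]
    by_cases hab : a = b
    · subst hab; rw [if_pos ⟨a, rfl, rfl⟩, if_pos rfl]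
    · rw [if_neg, if_neg hab]
      rintro ⟨c, hc1, hc2⟩
      exact hab ((r.injective hc1).symm.trans (t.injective hc2))
  set M := A.submatrix r t with hM
  set p := (-M).charpoly with hp
  have hpne : p ≠ 0 := (Matrix.charpoly_monic _).ne_zero
  have hroots : {x : 𝕂 | p.IsRoot x}.Finite := Polynomial.finite_setOf_isRoot hpne
  haveI : ∀ x : 𝕂, (nhdsWithin x {x}ᶜ).NeBot := fun x => NormedField.nhdsNE_neBot x
  have hdense : Dense {x : 𝕂 | p.IsRoot x}ᶜ := by
    rw [Set.compl_eq_univ_diff]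
    exact dense_univ.diff_finite hroots
  have hf : Continuous fun ε : 𝕂 => A + ε • E := by continuity
  have himg : (fun ε : 𝕂 => A + ε • E) '' {x : 𝕂 | p.IsRoot x}ᶜ ⊆
      {B : Matrix (Fin n) (Fin m) 𝕂 | det (B.submatrix r t) ≠ 0} := by
    rintro _ ⟨ε, hε, rfl⟩
    have hsub : (A + ε • E).submatrix ⇑r ⇑t = M + ε • (1 : Matrix (Fin k) (Fin k) 𝕂) := by
      ext a b
      have h1 : E (r a) (t b) = (1 : Matrix (Fin k) (Fin k) 𝕂) a b := by rw [← hE]; rfl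
      simp [Matrix.add_apply, Matrix.smul_apply, submatrix_apply, hM, h1]
    have hdet : det ((A + ε • E).submatrix ⇑r ⇑t) = p.eval ε := by
      rw [hsub, hp, eval_det_add_smul_one]
    simp only [Set.mem_setOf_eq, hdet]
    exact hε
  have h0 : (0 : 𝕂) ∈ closure {x : 𝕂 | p.IsRoot x}ᶜ := hdense 0
  have hA0 : A ∈ (fun ε : 𝕂 => A + ε • E) '' closure {x : 𝕂 | p.IsRoot x}ᶜ :=
    ⟨0, h0, by simp⟩
  exact closure_mono himg (image_closure_subset_closure_image hf hA0)

private lemma dense_iInter_finite {X ι : Type*} [TopologicalSpace X] [Finite ι]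
    {f : ι → Set X} (ho : ∀ i, IsOpen (f i)) (hd : ∀ i, Dense (f i)) :
    Dense (⋂ i, f i) := by
  cases nonempty_fintype ι
  have key : ∀ s : Finset ι, Dense (⋂ i ∈ s, f i) ∧ IsOpen (⋂ i ∈ s, f i) := by
    intro s
    induction s using Finset.induction with
    | empty => simpa using ⟨dense_univ, isOpen_univ⟩
    | insert _ _ hnot ih =>
        rw [Finset.set_biInter_insert]
        exact ⟨(hd _).inter_of_isOpen_left ih.1 (ho _), (ho _).inter ih.2⟩
  have huniv : ⋂ i ∈ (Finset.univ : Finset ι), f i = ⋂ i, f i := by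
    ext x; simp
  rw [← huniv]
  exact (key Finset.univ).1

private lemma dense_goodSet (𝕂 : Type) [RCLike 𝕂] (n m : ℕ) :
    Dense (goodSet 𝕂 n m) := by
  have hset : goodSet 𝕂 n m =
      ⋂ i : (Σ k : Fin (n + 1), (Fin k ↪ Fin n) × (Fin k ↪ Fin m)),
        {A : Matrix (Fin n) (Fin m) 𝕂 | det (A.submatrix i.2.1 i.2.2) ≠ 0} := by
    ext A
    simp only [goodSet, Set.mem_iInter, Set.mem_setOf_eq]
    constructor
    · rintro h ⟨k, r, t⟩; exact h k (Nat.lt_succ_iff.mp k.isLt) r t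
    · intro h k hk r t; exact h ⟨⟨k, Nat.lt_succ_of_le hk⟩, r, t⟩
  rw [hset]
  exact dense_iInter_finite (fun i => isOpen_minor_ne _ _) (fun i => dense_minor_ne _ _)

private lemma l0Norm_eq_sum {𝕂 : Type} [RCLike 𝕂] {n m : ℕ}
    (Ψ : Matrix (Fin n) (Fin m) 𝕂) :
    l0Norm Ψ = ∑ i : Fin n, (Finset.univ.filter fun j => Ψ i j ≠ 0).card := by
  have e : {p : Fin n × Fin m | Ψ p.1 p.2 ≠ 0} ≃ Σ i : Fin n, {j // Ψ i j ≠ 0} :=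
    Equiv.subtypeProdEquivSigmaSubtype fun i j => Ψ i j ≠ 0
  rw [l0Norm, ← Nat.card_coe_set_eq, Nat.card_congr e,
    Nat.card_eq_fintype_card, Fintype.card_sigma]
  exact Finset.sum_congr rfl fun i _ => by convert Fintype.card_subtype _

private lemma row_support_card {𝕂 : Type} [RCLike 𝕂] {n m : ℕ}
    {A Ψ : Matrix (Fin n) (Fin m) 𝕂} (hA : A ∈ goodSet 𝕂 n m)
    (hΨ : Ψ * Aᴴ = 1) (i : Fin n) :
    n ≤ (Finset.univ.filter fun j => Ψ i j ≠ 0).card := by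
  by_contra hlt
  push_neg at hlt
  set T := Finset.univ.filter fun j => Ψ i j ≠ 0 with hTdef
  set k := T.card with hkdef
  have hcard : k ≤ (Finset.univ.erase i).card := by
    rw [Finset.card_erase_of_mem (Finset.mem_univ i), Finset.card_univ, Fintype.card_fin]
    omega
  obtain ⟨R, hRsub, hRcard⟩ := Finset.exists_subset_card_eq hcard
  set t := T.orderEmbOfFin rfl with htdef
  set r := R.orderEmbOfFin hRcard with hrdef
  have htimg : Finset.univ.image t = T := by
    apply Finset.eq_of_subset_of_card_le
    · intro j hj
      obtain ⟨b, _, rfl⟩ := Finset.mem_image.mp hj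
      exact T.orderEmbOfFin_mem rfl b
    · rw [Finset.card_image_of_injective _ (T.orderEmbOfFin rfl).injective,
        Finset.card_univ, Fintype.card_fin]
  have hM : det (A.submatrix r t) ≠ 0 :=
    hA k (le_of_lt hlt) ⟨r, (R.orderEmbOfFin hRcard).injective⟩
      ⟨t, (T.orderEmbOfFin rfl).injective⟩
  set w : Fin k → 𝕂 := fun b => star (Ψ i (t b)) with hwdef
  have hsolve : (A.submatrix r t) *ᵥ w = 0 := by
    funext a
    have hra : r a ≠ i := Finset.ne_of_mem_erase (hRsub (R.orderEmbOfFin_mem hRcard a))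
    have h0 : (Ψ * Aᴴ) i (r a) = 0 := by rw [hΨ]; exact Matrix.one_apply_ne (Ne.symm hra)
    have hexp : ∑ j, Ψ i j * star (A (r a) j) = 0 := by
      simpa [Matrix.mul_apply, conjTranspose_apply] using h0
    have hsum : ∑ j ∈ T, Ψ i j * star (A (r a) j) = 0 := by
      rw [← hexp]
      apply Finset.sum_subset (Finset.subset_univ _)
      intro j _ hjT
      have hz : Ψ i j = 0 := by
        by_contra h
        exact hjT (Finset.mem_filter.mpr ⟨Finset.mem_univ _, h⟩)
      simp [hz]
    have himgsum : ∑ j ∈ Finset.image (⇑t) Finset.univ, Ψ i j * star (A (r a) j)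
        = ∑ b : Fin k, Ψ i (t b) * star (A (r a) (t b)) :=
      Finset.sum_image fun x _ y _ h => (T.orderEmbOfFin rfl).injective h
    have hsum2 : ∑ b : Fin k, Ψ i (t b) * star (A (r a) (t b)) = 0 := by
      rw [← himgsum, htimg]
      exact hsum
    have := congrArg star hsum2
    simpa [Matrix.mulVec, dotProduct, star_sum, mul_comm, hwdef] using this
  have hw : w = 0 := by
    have h1 : (A.submatrix r t)⁻¹ *ᵥ ((A.submatrix r t) *ᵥ w) = w := by
      rw [mulVec_mulVec, Matrix.nonsing_inv_mul _ (isUnit_iff_ne_zero.mpr hM), one_mulVec]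
    rw [hsolve, mulVec_zero] at h1
    exact h1.symm
  have hrow : ∀ j, Ψ i j = 0 := by
    intro j
    by_cases hj : j ∈ T
    · rw [← htimg] at hj
      obtain ⟨b, _, rfl⟩ := Finset.mem_image.mp hj
      have := congrFun hw b
      simpa [hwdef, star_eq_zero] using this
    · by_contra h
      exact hj (Finset.mem_filter.mpr ⟨Finset.mem_univ _, h⟩)
  have hone : (Ψ * Aᴴ) i i = 0 := by
    rw [Matrix.mul_apply]
    simp [hrow]
  rw [hΨ] at hone
  simp [Matrix.one_apply] at hone

private lemma goodSet_subset {𝕂 : Type} [RCLike 𝕂] {n m : ℕ} (hn : 1 ≤ n) (hnm : n ≤ m) :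
    goodSet 𝕂 n m ⊆ maxSparsityFrames 𝕂 n m := by
  intro A hA
  set t₀ : Fin n ↪ Fin m := Fin.castLEEmb hnm with ht₀
  set S := A.submatrix id ⇑t₀ with hSdef
  have hS : det S ≠ 0 := hA n le_rfl (Function.Embedding.refl _) t₀
  have hSH : IsUnit (Sᴴ.det) := by
    rw [det_conjTranspose]
    exact isUnit_iff_ne_zero.mpr (star_ne_zero.mpr hS)
  set P : Matrix (Fin n) (Fin m) 𝕂 := Matrix.of fun i j => if t₀ i = j then 1 else 0 with hPdef
  set Ψ := Sᴴ⁻¹ * P with hΨdef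
  have hPA : P * Aᴴ = Sᴴ := by
    ext i l
    rw [Matrix.mul_apply]
    simp only [hPdef, of_apply, ite_mul, one_mul, zero_mul]
    rw [Finset.sum_ite_eq Finset.univ (t₀ i) fun j => Aᴴ j l]
    simp [conjTranspose_apply, hSdef, submatrix_apply]
  have hdual : Ψ * Aᴴ = 1 := by
    rw [hΨdef, Matrix.mul_assoc, hPA, Matrix.nonsing_inv_mul _ hSH]
  have hrank : A.rank = n := by
    refine le_antisymm ?_ ?_
    · simpa using A.rank_le_card_height
    · have hAΨ : A * Ψᴴ = 1 := by
        have := congrArg conjTranspose hdual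
        simpa [conjTranspose_mul] using this
      calc n = (1 : Matrix (Fin n) (Fin n) 𝕂).rank := by simp
        _ = (A * Ψᴴ).rank := by rw [hAΨ]
        _ ≤ A.rank := Matrix.rank_mul_le_left _ _
  have hrow_le : ∀ i : Fin n, (Finset.univ.filter fun j => Ψ i j ≠ 0).card ≤ n := by
    intro i
    have hsub : (Finset.univ.filter fun j => Ψ i j ≠ 0) ⊆ Finset.univ.image t₀ := by
      intro j hj
      by_contra hjim
      have hPzero : ∀ a, P a j = 0 := by
        intro a
        simp only [hPdef, of_apply, ite_eq_right_iff]
        intro h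
        exact absurd (Finset.mem_image.mpr ⟨a, Finset.mem_univ _, h⟩) hjim
      have hz : Ψ i j = 0 := by
        rw [hΨdef, Matrix.mul_apply]
        simp [hPzero]
      exact (Finset.mem_filter.mp hj).2 hz
    calc (Finset.univ.filter fun j => Ψ i j ≠ 0).card
        ≤ (Finset.univ.image t₀).card := Finset.card_le_card hsub
      _ ≤ Finset.univ.card := Finset.card_image_le
      _ = n := by simp
  have hrow_eq : ∀ i : Fin n, (Finset.univ.filter fun j => Ψ i j ≠ 0).card = n :=
    fun i => le_antisymm (hrow_le i) (row_support_card hA hdual i)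
  have hl0 : l0Norm Ψ = n ^ 2 := by
    rw [l0Norm_eq_sum]
    simp [hrow_eq, sq]
  refine ⟨hrank, ⟨Ψ, hdual, hl0⟩, ?_⟩
  rintro c ⟨Ψ', hΨ', rfl⟩
  rw [l0Norm_eq_sum]
  calc n ^ 2 = ∑ _i : Fin n, n := by simp [sq]
    _ ≤ _ := Finset.sum_le_sum fun i _ => row_support_card hA hΨ' i

/-- For `m ≥ n ≥ 1`, every frame `Φ ∈ 𝕂^{n×m}` is arbitrarily close
(in the Euclidean topology) to a frame whose sparsest dual has exactly `n²` non-zero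
entries, i.e. every frame lies in the closure of `N(n,m)`. -/
theorem frames_close_to_max_sparsity {𝕂 : Type} [RCLike 𝕂] {n m : ℕ}
    (hn : 1 ≤ n) (hnm : n ≤ m)
    (Φ : Matrix (Fin n) (Fin m) 𝕂) (hΦ : Φ.rank = n) :
    Φ ∈ closure (maxSparsityFrames 𝕂 n m) := by
  exact closure_mono (goodSet_subset hn hnm) (dense_goodSet 𝕂 n m Φ)
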